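/- arXiv:2004.09008 — 8 statements merged into one kernel-verified Lean document; each statement's English description precedes it below -/
import Mathlib

section
/- Let d ≥ 3 and k ≥ 2 be integers. The Klein polynomial of type K_k, namely F(x₁,…,x_k) = x₁^{d-1}x₂ + x₂^{d-1}x₃ + ⋯ + x_{k-1}^{d-1}x_k + x_k^{d-1}x₁ over ℂ, is smooth: the only common zero in ℂ^k of all its partial derivatives is the origin. -/
open MvPolynomial

/-- Evaluation of the partial derivative of the Klein polynomial. -/
lemma klein_pderiv_eval (d k : ℕ) (hd : 3 ≤ d) (hk : 2 ≤ k) [NeZero k]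
    (x : Fin k → ℂ) (j : Fin k) :
    eval x (pderiv j (∑ i : Fin k, X i ^ (d-1) * X (i+1) : MvPolynomial (Fin k) ℂ))
      = x (j-1)^(d-1) + ((d-1 : ℕ) : ℂ) * x j ^ (d - 2) * x (j+1) := by
  have hk1 : k ≠ 1 := by omega
  have hone : (1 : Fin k) ≠ 0 := by
    simp [Fin.ext_iff, Nat.mod_eq_of_lt (show 1 < k by omega)]
  have hne : ∀ j : Fin k, j ≠ j - 1 := fun j h =>
    hone (neg_eq_zero.mp (left_eq_add.mp (by rwa [sub_eq_add_neg] at h)))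
  rw [map_sum, map_sum]
  have key : ∀ i : Fin k, eval x (pderiv j (X i ^ (d-1) * X (i+1) : MvPolynomial (Fin k) ℂ))
      = (if i = j - 1 then x i ^ (d-1) else 0)
        + (if i = j then ((d-1 : ℕ) : ℂ) * x i ^ (d-2) * x (i+1) else 0) := by
    intro i
    rw [pderiv_mul]
    have hij : (i + 1 = j) ↔ (i = j - 1) := eq_sub_iff_add_eq.symm
    have hij' : (1 + i = j) ↔ (i = j - 1) := by rw [add_comm]; exact hij
    by_cases h1 : i = j <;> by_cases h2 : i = j - 1
    · simp [h1, h2, ← hij, hne j, pderiv_pow, pderiv_X, Pi.single_apply, hk1,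
        show d - 1 - 1 = d - 2 from rfl]
    · simp [h1, h2, hij.not.mpr h2, hij'.not.mpr h2, hne j, pderiv_pow, pderiv_X,
        Pi.single_apply, hk1, show d - 1 - 1 = d - 2 from rfl]
    · simp [h1, h2, ← hij, hne j, pderiv_pow, pderiv_X, Pi.single_apply, hk1,
        show d - 1 - 1 = d - 2 from rfl]
    · simp [h1, h2, hij.not.mpr h2, hij'.not.mpr h2, hne j, pderiv_pow, pderiv_X,
        Pi.single_apply, hk1, show d - 1 - 1 = d - 2 from rfl]
  simp_rw [key, Finset.sum_add_distrib, Finset.sum_ite_eq' Finset.univ, Finset.mem_univ,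
    if_true]

open Fin.NatCast in
/-- The key algebraic fact: if the cyclic system of equations holds, `x = 0`. -/
lemma klein_system_zero (d k : ℕ) (hd : 3 ≤ d) (hk : 2 ≤ k) [NeZero k] (x : Fin k → ℂ)
    (h : ∀ j : Fin k, x (j-1)^(d-1) + ((d-1 : ℕ) : ℂ) * x j ^ (d-2) * x (j+1) = 0) :
    x = 0 := by
  by_contra hx
  obtain ⟨i, hi⟩ := Function.ne_iff.mp hx
  simp only [Pi.zero_apply] at hi
  -- all coordinates nonzero
  have hstep : ∀ n : ℕ, x (i + n) ≠ 0 := by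
    intro n
    induction n with
    | zero => simpa using hi
    | succ n ih =>
      have hj := h (i + n + 1)
      rw [add_sub_cancel_right] at hj
      have hl : x (i + n) ^ (d-1) ≠ 0 := pow_ne_zero _ ih
      rw [eq_neg_of_add_eq_zero_left hj] at hl
      have : x (i + (n:Fin k) + 1) ≠ 0 := by
        intro h0
        apply hl
        simp [h0, zero_pow (show d - 2 ≠ 0 by omega)]
      simpa [Nat.cast_add, add_assoc] using this
  have hall : ∀ j : Fin k, x j ≠ 0 := by
    intro j
    have := hstep ((j - i).val)
    rwa [Fin.cast_val_eq_self, add_sub_cancel] at this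
  -- norms
  have hnorm : ∀ j : Fin k, ‖x (j-1)‖ ^ (d-1)
      = ((d-1 : ℕ) : ℝ) * ‖x j‖ ^ (d-2) * ‖x (j+1)‖ := by
    intro j
    have := eq_neg_of_add_eq_zero_left (h j)
    calc ‖x (j-1)‖ ^ (d-1) = ‖x (j-1) ^ (d-1)‖ := (norm_pow _ _).symm
      _ = ‖-(((d-1 : ℕ) : ℂ) * x j ^ (d-2) * x (j+1))‖ := by rw [this]
      _ = ((d-1 : ℕ) : ℝ) * ‖x j‖ ^ (d-2) * ‖x (j+1)‖ := by
          simp [norm_mul, norm_pow]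
  set P : ℝ := ∏ j : Fin k, ‖x j‖ with hP
  have hPpos : 0 < P := Finset.prod_pos fun j _ => norm_pos_iff.mpr (hall j)
  have h1 : ∏ j : Fin k, ‖x (j-1)‖ ^ (d-1) = P ^ (d-1) := by
    rw [← Finset.prod_pow]
    exact (Equiv.subRight (1 : Fin k)).prod_comp fun j => ‖x j‖ ^ (d-1)
  have h2 : ∏ j : Fin k, (((d-1 : ℕ) : ℝ) * ‖x j‖ ^ (d-2) * ‖x (j+1)‖)
      = ((d-1 : ℕ) : ℝ) ^ k * P ^ (d-1) := by
    have hcyc : ∏ j : Fin k, ‖x (j+1)‖ = ∏ j : Fin k, ‖x j‖ :=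
      Fintype.prod_equiv (Equiv.addRight (1 : Fin k)) _ _ fun j => rfl
    rw [Finset.prod_mul_distrib, Finset.prod_mul_distrib, Finset.prod_const,
      Finset.card_univ, Fintype.card_fin, hcyc, Finset.prod_pow, ← hP,
      mul_assoc, ← pow_succ, show d - 2 + 1 = d - 1 by omega]
  have hmain : P ^ (d-1) = ((d-1 : ℕ) : ℝ) ^ k * P ^ (d-1) := by
    calc P ^ (d-1) = ∏ j : Fin k, ‖x (j-1)‖ ^ (d-1) := h1.symm
      _ = ∏ j : Fin k, (((d-1 : ℕ) : ℝ) * ‖x j‖ ^ (d-2) * ‖x (j+1)‖) :=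
          Finset.prod_congr rfl fun j _ => hnorm j
      _ = _ := h2
  have hPpow : (0:ℝ) < P ^ (d-1) := pow_pos hPpos _
  have : ((d-1 : ℕ) : ℝ) ^ k = 1 := by
    have := hmain
    field_simp at this
    nlinarith [hPpow]
  rw [← Nat.cast_pow, show (1:ℝ) = ((1:ℕ):ℝ) by norm_num, Nat.cast_inj] at this
  have h2k : 2 ^ k ≤ (d-1) ^ k := Nat.pow_le_pow_left (by omega) k
  have h1k : 1 < 2 ^ k := Nat.one_lt_two_pow (by omega)
  omega

/-- The Klein polynomial of type `K_k`:
`x₁^{d-1}x₂ + x₂^{d-1}x₃ + ⋯ + x_k^{d-1}x₁` (indices cyclic mod `k`) is smooth. -/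
theorem stmt_3 (d k : ℕ) (hd : 3 ≤ d) (hk : 2 ≤ k)
    (F : MvPolynomial (Fin k) ℂ)
    (hF : F = ∑ i : Fin k,
      X i ^ (d - 1) * X (⟨(i.val + 1) % k, Nat.mod_lt _ (by omega)⟩ : Fin k)) :
    ∀ x : Fin k → ℂ, (∀ i : Fin k, eval x (pderiv i F) = 0) → x = 0 := by
  haveI : NeZero k := ⟨by omega⟩
  intro x hx
  have hF' : F = ∑ i : Fin k, X i ^ (d-1) * X (i+1) := by
    rw [hF]
    refine Finset.sum_congr rfl fun i _ => ?_
    congr 2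
    rw [Fin.ext_iff, Fin.add_def]
    simp [Nat.mod_eq_of_lt (show 1 < k by omega)]
  refine klein_system_zero d k hd hk x fun j => ?_
  rw [← klein_pderiv_eval d k hd hk x j, ← hF']
  exact hx j
end

section
/- Let d ≥ 3, k ≥ 2 be integers and let i : {1,…,k} → {1,…,k} be a function. If there exist indices a < b with i(a) = i(b) and i(a) ∉ {a, b}, then the polynomial F(x₁,…,x_k) = Σ_{a=1}^{k} x_a^{d-1} x_{i(a)} over ℂ is not smooth; explicitly, all partial derivatives of F vanish at a nonzero point of ℂ^k. -/
open MvPolynomial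

/-- If `i a = i b` for `a < b` with `i a ∉ {a, b}`, then `F = ∑ x_a^{d-1} x_{i a}`
is not smooth: all partial derivatives vanish at a nonzero point. -/
theorem stmt_4 (d k : ℕ) (hd : 3 ≤ d) (hk : 2 ≤ k) (i : Fin k → Fin k)
    (a b : Fin k) (hab : a < b) (hib : i a = i b) (ha : i a ≠ a) (hb : i a ≠ b)
    (F : MvPolynomial (Fin k) ℂ)
    (hF : F = ∑ a : Fin k, X a ^ (d - 1) * X (i a)) :
    ∃ x : Fin k → ℂ, x ≠ 0 ∧ ∀ j : Fin k, eval x (pderiv j F) = 0 := by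
  classical
  have hdc : ((d : ℂ) - 1) ≠ 0 := by
    rw [sub_ne_zero]
    exact_mod_cast (by omega : d ≠ 1)
  set ζ : ℂ := Complex.exp (Real.pi * Complex.I / ((d : ℂ) - 1)) with hζdef
  have hd1 : ((d - 1 : ℕ) : ℂ) = (d : ℂ) - 1 := by
    push_cast [Nat.cast_sub (by omega : 1 ≤ d)]; ring
  have hζ : ζ ^ (d - 1) = -1 := by
    rw [hζdef, ← Complex.exp_nat_mul]
    rw [show ((d - 1 : ℕ) : ℂ) * (Real.pi * Complex.I / ((d : ℂ) - 1)) = Real.pi * Complex.I by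
      rw [hd1]; field_simp]
    exact Complex.exp_pi_mul_I
  set x : Fin k → ℂ := fun c => if c = a then 1 else if c = b then ζ else 0 with hx
  have hab' : a ≠ b := ne_of_lt hab
  have hxa : x a = 1 := by simp [hx]
  have hxb : x b = ζ := by simp [hx, hab'.symm]
  have hxi : x (i a) = 0 := by simp [hx, ha, hb]
  refine ⟨x, ?_, ?_⟩
  · intro h
    have := congrFun h a
    rw [hxa] at this
    exact one_ne_zero this
  · intro j
    subst hF
    rw [map_sum]
    simp only [pderiv_mul, pderiv_pow, pderiv_X, map_sum]
    have hterm : ∀ c : Fin k, eval x ((((d - 1 : ℕ) : MvPolynomial (Fin k) ℂ) * X c ^ (d - 1 - 1) *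
        (Pi.single (M := fun _ => MvPolynomial (Fin k) ℂ) j 1 c)) * X (i c)
        + X c ^ (d - 1) * (Pi.single (M := fun _ => MvPolynomial (Fin k) ℂ) j 1 (i c))) =
        ((d - 1 : ℕ) : ℂ) * x c ^ (d - 1 - 1) * (if c = j then 1 else 0) * x (i c)
        + x c ^ (d - 1) * (if i c = j then 1 else 0) := by
      intro c
      simp [Pi.single_apply, apply_ite (eval x)]
    rw [Finset.sum_congr rfl fun c _ => hterm c]
    rw [← Finset.sum_subset (Finset.subset_univ {a, b}) ?_, Finset.sum_pair hab']
    · have hba : b ≠ a := hab'.symm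
      rcases eq_or_ne a j with rfl | h1
      · have h2 : i a ≠ a := ha
        have h4 : i b ≠ a := hib ▸ ha
        have hxib : x (i b) = 0 := hib ▸ hxi
        simp [h2, h4, hba, hxi, hxib, hxa]
      · rcases eq_or_ne b j with rfl | h3
        · have h2 : i a ≠ b := hb
          have h4 : i b ≠ b := hib ▸ hb
          have hxib : x (i b) = 0 := hib ▸ hxi
          simp [h2, h4, hab', hxib, hxb]
        · rcases eq_or_ne (i a) j with rfl | h2
          · have h5 : a ≠ i a := fun h => ha h.symm
            have h6 : b ≠ i a := fun h => hb h.symm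
            have h7 : i b = i a := hib.symm
            simp [h5, h6, h7, hxa, hxb, hxi, hζ]
          · have h4 : i b ≠ j := hib ▸ h2
            simp [h1, h2, h3, h4]
    · intro c _ hc
      simp only [Finset.mem_insert, Finset.mem_singleton, not_or] at hc
      have hxc : x c = 0 := by simp [hx, hc.1, hc.2]
      have hd2 : d - 1 - 1 ≠ 0 := by omega
      have hd1' : d - 1 ≠ 0 := by omega
      simp [hxc, zero_pow hd2, zero_pow hd1']
end

section
/- Let d ≥ 3 and N ≥ 1 be integers, let m = |1 - (1-d)^N|, and let ζ ∈ ℂ be a primitive m-th root of unity. Then the diagonal matrix g = diag(ζ, ζ^{1-d}, ζ^{(1-d)^2}, …, ζ^{(1-d)^{N-1}}) satisfies: for the Klein polynomial F = x₁^{d-1}x₂ + ⋯ + x_{N-1}^{d-1}x_N + x_N^{d-1}x₁, we have F(g·x) = F(x) for all x ∈ ℂ^N, and the image of g in PGL(N,ℂ) has order m/d. -/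
open MvPolynomial

/-- The diagonal matrix `g = diag(ζ, ζ^{1-d}, …, ζ^{(1-d)^{N-1}})`, with `ζ` a
primitive `m`-th root of unity for `m = |1-(1-d)^N|`, leaves the Klein
polynomial invariant, and its class in `PGL(N, ℂ)` (i.e. modulo scalars) has
order exactly `m / d`. -/

theorem stmt_6 (d N : ℕ) (hd : 3 ≤ d) (hN : 1 ≤ N) (m : ℕ)
    (hm : m = ((1 : ℤ) - (1 - (d : ℤ)) ^ N).natAbs)
    (ζ : ℂ) (hζ : IsPrimitiveRoot ζ m)
    (F : MvPolynomial (Fin N) ℂ)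
    (hF : F = ∑ i : Fin N,
      X i ^ (d - 1) * X (⟨(i.val + 1) % N, Nat.mod_lt _ (by omega)⟩ : Fin N)) :
    (∀ x : Fin N → ℂ,
      eval (fun j : Fin N => ζ ^ ((1 - (d : ℤ)) ^ (j : ℕ)) * x j) F = eval x F) ∧
    IsLeast {r : ℕ | 0 < r ∧ ∃ c : ℂ, ∀ j : Fin N,
      (ζ ^ ((1 - (d : ℤ)) ^ (j : ℕ))) ^ r = c} (m / d) := by
  set t : ℤ := 1 - (d : ℤ) with ht
  have hdvdt : ∀ j : ℕ, (d : ℤ) ∣ 1 - t ^ j := by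
    intro j
    have h1 : t ≡ 1 [ZMOD (d:ℤ)] := by
      refine Int.modEq_iff_dvd.mpr ⟨1, ?_⟩
      simp only [ht]; ring
    have h2 := (h1.pow j).dvd
    simpa using h2
  have hpowne : t ^ N ≠ 1 := by
    intro h
    have h2 : (2:ℤ) ≤ |t| := by rw [abs_of_nonpos (by omega)]; omega
    have h3 : (2:ℤ)^N ≤ |t|^N := pow_le_pow_left₀ (by norm_num) h2 N
    rw [← abs_pow, h] at h3
    have h5 : (2:ℤ)^1 ≤ 2^N := pow_le_pow_right₀ (by norm_num) hN
    simp at h3; linarith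
  have hm0 : m ≠ 0 := by
    rw [hm]; simpa using sub_ne_zero_of_ne (Ne.symm hpowne)
  have hζ0 : ζ ≠ 0 := hζ.ne_zero hm0
  have hζm : ζ ^ ((m:ℤ)) = 1 := by rw [zpow_natCast]; exact hζ.pow_eq_one
  have hmdvd : (m:ℤ) ∣ 1 - t ^ N := by
    rw [hm]; exact Int.natAbs_dvd.mpr dvd_rfl
  have hdm : d ∣ m := by
    have h : (d:ℤ) ∣ (m:ℤ) := by
      rw [hm]; exact Int.dvd_natAbs.mpr (hdvdt N)
    exact_mod_cast h
  have hdc : ((d - 1 : ℕ) : ℤ) = (d:ℤ) - 1 := by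
    push_cast [Nat.cast_sub (by omega : 1 ≤ d)]; ring
  have inv : ∀ x : Fin N → ℂ,
      eval (fun j : Fin N => ζ ^ (t ^ (j : ℕ)) * x j) F = eval x F := by
    intro x
    subst hF
    rw [map_sum, map_sum]
    refine Finset.sum_congr rfl fun i _ => ?_
    simp only [eval_mul, eval_pow, eval_X]
    rw [mul_pow, mul_mul_mul_comm]
    have key : (ζ ^ (t ^ (i:ℕ))) ^ (d - 1) * ζ ^ (t ^ (((i:ℕ) + 1) % N)) = 1 := by
      obtain ⟨n, hn⟩ : ∃ n : ℕ, (i:ℕ) = n := ⟨_, rfl⟩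
      have hnN : n < N := hn ▸ i.isLt
      rw [hn]
      rw [← zpow_natCast (ζ ^ (t ^ n)) (d-1), ← zpow_mul, ← zpow_add₀ hζ0]
      rcases lt_or_eq_of_le (Nat.succ_le_of_lt hnN) with hlt | heq
      · have hmod : (n + 1) % N = n + 1 := Nat.mod_eq_of_lt hlt
        rw [hmod]
        have hz : t ^ n * ((d-1 : ℕ):ℤ) + t ^ (n+1) = 0 := by
          rw [hdc, pow_succ]; simp only [ht]; ring
        rw [hz, zpow_zero]
      · have hmod : (n + 1) % N = 0 := by rw [← heq]; simp [Nat.succ_eq_add_one]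
        rw [hmod]
        have hexp : t ^ n * ((d-1 : ℕ):ℤ) + t ^ 0 = 1 - t ^ N := by
          rw [hdc, pow_zero, ← heq, pow_succ]; simp only [ht]; ring
        rw [hexp]
        obtain ⟨k, hk⟩ := hmdvd
        rw [hk, zpow_mul, hζm, one_zpow]
    rw [key, one_mul]
  refine ⟨inv, ⟨⟨Nat.div_pos (Nat.le_of_dvd (Nat.pos_of_ne_zero hm0) hdm) (by omega),
      ζ ^ ((m/d : ℕ):ℤ), ?_⟩, ?_⟩⟩
  · intro j
    rw [← zpow_natCast (ζ ^ (t ^ (j:ℕ))) (m/d), ← zpow_mul]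
    obtain ⟨k, hk⟩ := hdvdt (j:ℕ)
    have hmd' : ((m / d : ℕ) : ℤ) * (d:ℤ) = (m:ℤ) := by
      exact_mod_cast Nat.div_mul_cancel hdm
    have he : t ^ (j:ℕ) * ((m/d:ℕ):ℤ) = ((m/d:ℕ):ℤ) + (m:ℤ) * (-k) := by
      linear_combination (-(((m/d:ℕ):ℤ))) * hk - k * hmd'
    rw [he, zpow_add₀ hζ0, zpow_mul, hζm, one_zpow, mul_one]
  · rintro r ⟨hr, c, hc⟩
    rcases eq_or_lt_of_le hN with h1 | h2
    · have hmd2 : m = d := by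
        have h1t : (1:ℤ) - t ^ N = (d:ℤ) := by
          rw [← h1, pow_one]; simp only [ht]; ring
        rw [hm, h1t, Int.natAbs_natCast]
      rw [hmd2, Nat.div_self (by omega)]; omega
    · have h0 := hc ⟨0, by omega⟩
      have h1' := hc ⟨1, by omega⟩
      simp only at h0 h1'
      rw [← h0] at h1'
      have hz : ζ ^ (r * d) = 1 := by
        have e0 : (ζ ^ (t ^ (0:ℕ))) ^ r = ζ ^ ((r:ℤ)) := by
          rw [pow_zero, zpow_one, ← zpow_natCast]
        have e1 : (ζ ^ (t ^ (1:ℕ))) ^ r = ζ ^ (t * r) := by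
          rw [pow_one, ← zpow_natCast (ζ ^ t) r, ← zpow_mul]
        rw [e0, e1] at h1'
        have hzz : ζ ^ ((r:ℤ) - t * r) = 1 := by
          rw [zpow_sub₀ hζ0, h1', ← zpow_sub₀ hζ0, sub_self, zpow_zero]
        have he : (r:ℤ) - t * r = ((r * d : ℕ) : ℤ) := by
          simp only [ht]; push_cast; ring
        rw [he, zpow_natCast] at hzz
        exact hzz
      have hmrd : m ∣ r * d := (hζ.pow_eq_one_iff_dvd _).mp hz
      obtain ⟨q, hq⟩ := hdm
      obtain ⟨s, hs⟩ := hmrd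
      have hrqs : r = q * s := by
        have hh : r * d = (q * s) * d := by rw [hs, hq]; ring
        exact Nat.eq_of_mul_eq_mul_right (by omega) hh
      have hqd : m / d = q := by rw [hq, Nat.mul_div_cancel_left _ (by omega : 0 < d)]
      rw [hqd]
      exact Nat.le_of_dvd hr ⟨s, hrqs⟩
end

section
/- Let k ≥ 2 and d ≥ 2 be integers, let G₁,…,G_k be finite cyclic groups, and for each i let u_i ∈ G_i be an element of order d. Let G = (G₁ × ⋯ × G_k)/⟨(u₁,…,u_k)⟩. Then an integer n ≥ 1 is the order of some element of G if and only if n divides lcm(|G₁|,…,|G_k|). -/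
/-- For finite cyclic groups `G₁,…,G_k` and elements `u_i ∈ G_i` of order `d`,
an integer `n ≥ 1` is the order of an element of
`(G₁ × ⋯ × G_k)/⟨(u₁,…,u_k)⟩` iff `n` divides `lcm(|G₁|,…,|G_k|)`. -/
theorem stmt_10 (k d : ℕ) (hk : 2 ≤ k) (hd : 2 ≤ d)
    (G : Fin k → Type*) [∀ i, CommGroup (G i)] [∀ i, Fintype (G i)]
    [∀ i, IsCyclic (G i)]
    (u : ∀ i, G i) (hu : ∀ i, orderOf (u i) = d)
    (n : ℕ) (hn : 1 ≤ n) :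
    (∃ x : (∀ i, G i) ⧸ Subgroup.zpowers u, orderOf x = n) ↔
      n ∣ Finset.univ.lcm (fun i : Fin k => Fintype.card (G i)) := by
  classical
  set L := Finset.univ.lcm (fun i : Fin k => Fintype.card (G i)) with hLdef
  have hcard : ∀ i, Fintype.card (G i) ≠ 0 := fun i => Fintype.card_ne_zero
  have hL0 : L ≠ 0 := by
    rw [hLdef, Ne, Finset.lcm_eq_zero_iff]
    intro h
    obtain ⟨i, -, hi⟩ := h
    exact hcard i hi
  -- exponent of the product
  have hexp : Monoid.exponent (∀ i, G i) = L := by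
    rw [Monoid.exponent_pi, hLdef]
    congr 1
    funext i
    rw [IsCyclic.exponent_eq_card, Nat.card_eq_fintype_card]
  -- exponent of the quotient divides L
  have hQdvd : Monoid.exponent ((∀ i, G i) ⧸ Subgroup.zpowers u) ∣ L := by
    rw [← hexp]
    exact MonoidHom.exponent_dvd (f := QuotientGroup.mk' (Subgroup.zpowers u))
      (QuotientGroup.mk'_surjective _)
  -- each card divides the exponent of the quotient
  have hdvdQ : ∀ i, Fintype.card (G i) ∣
      Monoid.exponent ((∀ i, G i) ⧸ Subgroup.zpowers u) := by
    intro i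
    obtain ⟨g, hg⟩ := IsCyclic.exists_generator (α := G i)
    have hgord : orderOf g = Fintype.card (G i) := by
      rw [orderOf_eq_card_of_forall_mem_zpowers hg, Nat.card_eq_fintype_card]
    obtain ⟨j, hj⟩ : ∃ j : Fin k, j ≠ i := by
      have : 1 < Fintype.card (Fin k) := by rw [Fintype.card_fin]; omega
      exact Fintype.exists_ne_of_one_lt_card this i
    set x : ∀ i, G i := Pi.mulSingle i g with hx
    have key : Fintype.card (G i) ∣ orderOf (QuotientGroup.mk (s := Subgroup.zpowers u) x) := by
      set m := orderOf (QuotientGroup.mk (s := Subgroup.zpowers u) x) with hm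
      have hxm : x ^ m ∈ Subgroup.zpowers u := by
        have := pow_orderOf_eq_one (QuotientGroup.mk (s := Subgroup.zpowers u) x)
        rw [← QuotientGroup.mk_pow] at this
        rwa [← QuotientGroup.eq_one_iff]
      obtain ⟨t, ht⟩ := hxm
      -- look at coordinate j: x agrees with 1 there
      have hj1 : (u j) ^ t = 1 := by
        have := congrFun ht.symm j
        simpa [hx, Pi.mulSingle_eq_of_ne hj] using this.symm
      have hdt : (d : ℤ) ∣ t := by
        rw [← hu j]
        exact orderOf_dvd_iff_zpow_eq_one.mpr hj1
      have hi0 : (u i) ^ t = 1 := by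
        rw [← hu i] at hdt
        exact orderOf_dvd_iff_zpow_eq_one.mp hdt
      have : g ^ m = 1 := by
        have := congrFun ht.symm i
        simp only [Pi.pow_apply] at this
        rw [hi0] at this
        simpa [hx, Pi.mulSingle_eq_same] using this
      rw [← hgord]
      exact orderOf_dvd_of_pow_eq_one this
    exact key.trans (Monoid.order_dvd_exponent _)
  have hQexp : Monoid.exponent ((∀ i, G i) ⧸ Subgroup.zpowers u) = L := by
    refine Nat.dvd_antisymm hQdvd ?_
    rw [hLdef]
    exact Finset.lcm_dvd fun i _ => hdvdQ i
  constructor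
  · rintro ⟨x, rfl⟩
    rw [← hQexp]
    exact Monoid.order_dvd_exponent x
  · intro hnd
    have hE : Monoid.ExponentExists ((∀ i, G i) ⧸ Subgroup.zpowers u) := by
      rw [← Monoid.exponent_ne_zero, hQexp]
      exact hL0
    obtain ⟨x, hx⟩ := Monoid.exists_orderOf_eq_exponent hE
    rw [hQexp] at hx
    refine ⟨x ^ (L / n), ?_⟩
    rw [← hx]
    exact orderOf_pow_orderOf_div (by rw [hx]; exact hL0) (by rw [hx]; exact hnd)
end

section
/- Let k ≥ 2, d ≥ 2, let G₁,…,G_k be finite cyclic groups each containing an element of order d (so d divides each |G_i|), and let u_i ∈ G_i have order d. Then the quotient group G = (G₁ × ⋯ × G_k)/⟨(u₁,…,u_k)⟩ contains an element of order lcm(|G₁|,…,|G_k|). -/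
/-- For finite cyclic groups `G₁,…,G_k` and elements `u_i ∈ G_i` of order `d`,
the quotient `(G₁ × ⋯ × G_k)/⟨(u₁,…,u_k)⟩` contains an element of order
`lcm(|G₁|,…,|G_k|)`. -/
theorem stmt_11 (k d : ℕ) (hk : 2 ≤ k) (hd : 2 ≤ d)
    (G : Fin k → Type*) [∀ i, CommGroup (G i)] [∀ i, Fintype (G i)]
    [∀ i, IsCyclic (G i)]
    (u : ∀ i, G i) (hu : ∀ i, orderOf (u i) = d) :
    ∃ x : (∀ i, G i) ⧸ Subgroup.zpowers u,
      orderOf x = Finset.univ.lcm (fun i : Fin k => Fintype.card (G i)) := by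
  set Q := (∀ i, G i) ⧸ Subgroup.zpowers u
  set L := Finset.univ.lcm (fun i : Fin k => Fintype.card (G i)) with hL
  -- Each card divides the exponent of Q
  have hdvd : ∀ i : Fin k, Fintype.card (G i) ∣ Monoid.exponent Q := by
    intro i
    obtain ⟨g, hg⟩ := IsCyclic.exists_generator (α := G i)
    have hgord : orderOf g = Fintype.card (G i) := (orderOf_eq_card_of_forall_mem_zpowers hg).trans Nat.card_eq_fintype_card
    set v : ∀ j, G j := Pi.mulSingle i g with hv
    have h1 : (QuotientGroup.mk v : Q) ^ Monoid.exponent Q = 1 :=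
      Monoid.pow_exponent_eq_one _
    rw [← QuotientGroup.mk_pow, QuotientGroup.eq_one_iff] at h1
    obtain ⟨t, ht⟩ := h1
    -- pick j ≠ i
    obtain ⟨j, hj⟩ : ∃ j : Fin k, j ≠ i := by
      have : Nontrivial (Fin k) := Fin.nontrivial_iff_two_le.mpr hk
      exact exists_ne i
    have htj : (u j) ^ t = 1 := by
      have := congr_fun ht j
      simpa [hv, Pi.mulSingle_apply, hj] using this
    have hdt : (d : ℤ) ∣ t := by
      rw [← hu j]
      exact orderOf_dvd_iff_zpow_eq_one.mpr htj
    have hti : (u i) ^ t = g ^ Monoid.exponent Q := by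
      have := congr_fun ht i
      simpa [hv] using this
    obtain ⟨s, rfl⟩ := hdt
    have hud : (u i) ^ (d : ℤ) = 1 := by
      rw [← hu i]
      exact_mod_cast zpow_natCast (u i) (orderOf (u i)) ▸ pow_orderOf_eq_one (u i)
    have : g ^ Monoid.exponent Q = 1 := by
      rw [← hti, zpow_mul, hud, one_zpow]
    rw [← hgord]
    exact orderOf_dvd_of_pow_eq_one this
  have hLdvd : L ∣ Monoid.exponent Q := Finset.lcm_dvd fun i _ => hdvd i
  have hexpdvd : Monoid.exponent Q ∣ L := by
    have h1 : Monoid.exponent Q ∣ Monoid.exponent (∀ i, G i) :=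
      MonoidHom.exponent_dvd (f := QuotientGroup.mk' (Subgroup.zpowers u))
        (QuotientGroup.mk'_surjective _)
    have h2 : Monoid.exponent (∀ i, G i) = L := by
      rw [Monoid.exponent_pi, hL]
      exact Finset.lcm_congr rfl fun i _ => by
        rw [IsCyclic.exponent_eq_card, Nat.card_eq_fintype_card]
    rwa [h2] at h1
  have hexp : Monoid.exponent Q = L := Nat.dvd_antisymm hexpdvd hLdvd
  obtain ⟨x, hx⟩ := Monoid.exists_orderOf_eq_exponent (G := Q) Monoid.ExponentExists.of_finite
  exact ⟨x, by rw [hx, hexp]⟩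
end

section
/- Let F(x₁,…,x_N) be a smooth homogeneous polynomial of degree d ≥ 3 over ℂ in N ≥ 2 variables. Let a > b ≥ 0 and let i₁,…,i_a, j₁,…,j_b ∈ {1,…,N} be distinct indices. Then F contains a monomial with nonzero coefficient in which the total degree of the variables x_{i₁},…,x_{i_a} is at least d−1 and none of the variables x_{j₁},…,x_{j_b} appears. -/
open MvPolynomial

private lemma my_degree_add {σ : Type*} (a b : σ →₀ ℕ) :
    (a + b).degree = a.degree + b.degree := by
  simp only [Finsupp.degree_eq_weight_one, map_add]

private lemma my_degree_single {σ : Type*} (i : σ) (k : ℕ) :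
    (Finsupp.single i k).degree = k := by
  rcases eq_or_ne k 0 with rfl | hk
  · simp [Finsupp.degree]
  · exact Finsupp.degree_single i k

private lemma isHomog_degree {σ : Type*} {F : MvPolynomial σ ℂ} {d : ℕ}
    (h : F.IsHomogeneous d) {m : σ →₀ ℕ} (hm : m ∈ F.support) : m.degree = d := by
  rw [Finsupp.degree_eq_weight_one]
  exact h (Finsupp.mem_support_iff.mp hm)

private lemma degree_le_sum_univ {σ : Type*} [Fintype σ] (m : σ →₀ ℕ) :
    m.degree ≤ ∑ i, m i :=
  le_of_eq (Finset.sum_subset (Finset.subset_univ _)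
    (fun i _ hi => Finsupp.notMem_support_iff.mp hi))

private lemma homComp_mul_homog {σ : Type*} {n e : ℕ} (p q : MvPolynomial σ ℂ)
    (hq : q.IsHomogeneous e) (he : e ≤ n) :
    homogeneousComponent n (p * q) = homogeneousComponent (n - e) p * q := by
  conv_lhs => rw [← sum_homogeneousComponent p, Finset.sum_mul, map_sum]
  rw [Finset.sum_eq_single (n - e)]
  · have hmem : homogeneousComponent (n - e) p * q ∈ homogeneousSubmodule σ ℂ ((n - e) + e) := by
      rw [mem_homogeneousSubmodule]
      exact (homogeneousComponent_isHomogeneous _ _).mul hq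
    rw [homogeneousComponent_of_mem hmem, if_pos (by omega)]
  · intro b _ hb
    have hmem : homogeneousComponent b p * q ∈ homogeneousSubmodule σ ℂ (b + e) := by
      rw [mem_homogeneousSubmodule]
      exact (homogeneousComponent_isHomogeneous _ _).mul hq
    rw [homogeneousComponent_of_mem hmem, if_neg (by omega)]
  · intro h
    rw [Finset.mem_range, not_lt] at h
    have hz : p.totalDegree < n - e := by omega
    rw [homogeneousComponent_eq_zero _ _ hz, zero_mul, map_zero]

private lemma pderiv_isHomog {σ : Type*} [DecidableEq σ] {F : MvPolynomial σ ℂ} {d : ℕ}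
    (h : F.IsHomogeneous d) (i : σ) : (pderiv i F).IsHomogeneous (d - 1) := by
  rw [F.as_sum, map_sum]
  apply IsHomogeneous.sum
  intro m hm
  rw [pderiv_monomial]
  by_cases h0 : m i = 0
  · rw [h0]; simp only [Nat.cast_zero, mul_zero, monomial_zero]
    exact isHomogeneous_zero _ _ _
  · apply isHomogeneous_monomial
    have hle : Finsupp.single i 1 ≤ m := by
      rw [Finsupp.single_le_iff]; omega
    have hdec : (m - Finsupp.single i 1) + Finsupp.single i 1 = m := tsub_add_cancel_of_le hle
    have hdm : m.degree = d := isHomog_degree h hm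
    have := congrArg Finsupp.degree hdec
    rw [my_degree_add, my_degree_single, hdm] at this
    omega

/-- Over `ℂ`, a system of homogeneous polynomials of positive degrees, in more
variables than there are polynomials, has a nontrivial common zero. -/
private lemma exists_common_zero {σ ι : Type*} [Fintype σ] [Fintype ι]
    [DecidableEq σ] [DecidableEq ι]
    (hlt : Fintype.card ι < Fintype.card σ)
    (f : ι → MvPolynomial σ ℂ) (df : ι → ℕ) (hdf : ∀ j, 1 ≤ df j)
    (hf : ∀ j, (f j).IsHomogeneous (df j)) :
    ∃ ξ : σ → ℂ, ξ ≠ 0 ∧ ∀ j, eval ξ (f j) = 0 := by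
  by_contra hcon
  push_neg at hcon
  set I : Ideal (MvPolynomial σ ℂ) := Ideal.span (Set.range f) with hI
  -- every variable is in the radical of the ideal generated by the `f j`
  have hXrad : ∀ i : σ, X i ∈ I.radical := by
    intro i
    rw [← vanishingIdeal_zeroLocus_eq_radical (K := ℂ)]
    intro x hx
    have hx0 : x = 0 := by
      by_contra hxne
      obtain ⟨j, hj⟩ := hcon x hxne
      exact hj (hx (f j) (Ideal.subset_span ⟨j, rfl⟩))
    rw [← mem_vanishingIdeal_singleton_iff]
    intro p hp
    rw [Set.mem_singleton_iff] at hp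
    subst hp
    rw [hx0, aeval_X]
    rfl
  choose n hn using fun i => (Ideal.mem_radical_iff.mp (hXrad i))
  -- a uniform exponent
  set M : ℕ := (Finset.univ.sup n) + (Finset.univ.sup df) + 1 with hMdef
  have hM : 1 ≤ M := by omega
  have hdfM : ∀ j, df j ≤ M := fun j =>
    le_trans (Finset.le_sup (Finset.mem_univ j)) (by omega)
  have hXM : ∀ i : σ, X (R := ℂ) i ^ M ∈ I := by
    intro i
    have hni : n i ≤ M := le_trans (Finset.le_sup (Finset.mem_univ i)) (by omega)
    have : X (R := ℂ) i ^ M = X i ^ (M - n i) * X i ^ n i := by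
      rw [← pow_add]; congr 1; omega
    rw [this]
    exact Ideal.mul_mem_left _ _ (hn i)
  -- homogeneous coefficients for the expression of `X i ^ M`
  have hgex : ∀ i : σ, ∃ g : ι → MvPolynomial σ ℂ, (∀ j, (g j).IsHomogeneous (M - df j)) ∧
      ∑ j, g j * f j = X (R := ℂ) i ^ M := by
    intro i
    obtain ⟨c, hc⟩ := Ideal.mem_span_range_iff_exists_fun.mp (hXM i)
    refine ⟨fun j => homogeneousComponent (M - df j) (c j),
      fun j => homogeneousComponent_isHomogeneous _ _, ?_⟩
    have hmapped := congrArg (homogeneousComponent M) hc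
    rw [map_sum] at hmapped
    have hX : homogeneousComponent M (X (R := ℂ) i ^ M) = X i ^ M := by
      rw [homogeneousComponent_of_mem ((mem_homogeneousSubmodule _ _).mpr
        (isHomogeneous_X_pow i M)), if_pos rfl]
    rw [hX] at hmapped
    rw [← hmapped]
    exact Finset.sum_congr rfl fun j _ => (homComp_mul_homog (c j) (f j) (hf j) (hdfM j)).symm
  choose g hghom hg using hgex
  -- the key spanning statement
  have key : ∀ e (m : σ →₀ ℕ), m.degree = e → monomial m (1:ℂ) ∈ Submodule.span ℂ
      { p | ∃ (α : ι → ℕ) (μ : σ →₀ ℕ), (∀ i, μ i < M) ∧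
          ((∑ j, α j * df j) + μ.degree = e) ∧ p = (∏ j, f j ^ α j) * monomial μ 1 } := by
    intro e
    induction e using Nat.strong_induction_on with
    | _ e ih =>
      intro m hm
      by_cases hcase : ∀ i, m i < M
      · apply Submodule.subset_span
        exact ⟨0, m, hcase, by simpa using hm, by simp⟩
      · push_neg at hcase
        obtain ⟨i, hiM⟩ := hcase
        have hle : Finsupp.single i M ≤ m := by rw [Finsupp.single_le_iff]; exact hiM
        set m' := m - Finsupp.single i M with hm'def
        have hdec : m' + Finsupp.single i M = m := tsub_add_cancel_of_le hle
        have hdeg' : m'.degree + M = e := by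
          have := congrArg Finsupp.degree hdec
          rw [my_degree_add, my_degree_single, hm] at this
          omega
        have heM : M ≤ e := by omega
        have hsplit : monomial m (1:ℂ) = X i ^ M * monomial m' 1 := by
          rw [X_pow_eq_monomial, monomial_mul, one_mul, add_comm, hdec]
        rw [hsplit, ← hg i, Finset.sum_mul]
        apply Submodule.sum_mem
        intro j _
        rw [(g i j).as_sum, Finset.sum_mul, Finset.sum_mul]
        apply Submodule.sum_mem
        intro κ hκ
        have hterm : monomial κ (coeff κ (g i j)) * f j * monomial m' 1
            = coeff κ (g i j) • (f j * monomial (κ + m') 1) := by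
          rw [show monomial κ (coeff κ (g i j)) = coeff κ (g i j) • monomial κ (1:ℂ) by
            rw [smul_monomial, smul_eq_mul, mul_one]]
          rw [smul_mul_assoc, smul_mul_assoc]
          congr 1
          rw [mul_comm (monomial κ 1) (f j), mul_assoc, monomial_mul, one_mul]
        rw [hterm]
        apply Submodule.smul_mem
        have hκdeg : (κ + m').degree = e - df j := by
          have h1 : κ.degree = M - df j := isHomog_degree (hghom i j) hκ
          rw [my_degree_add, h1]
          have := hdfM j
          omega
        have hind := ih (e - df j) (by have := hdf j; omega) (κ + m') hκdeg
        have hmul : ∀ p ∈ Submodule.span ℂ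
            { p | ∃ (α : ι → ℕ) (μ : σ →₀ ℕ), (∀ i, μ i < M) ∧
                ((∑ j, α j * df j) + μ.degree = e - df j) ∧ p = (∏ j, f j ^ α j) * monomial μ 1 },
            f j * p ∈ Submodule.span ℂ
            { p | ∃ (α : ι → ℕ) (μ : σ →₀ ℕ), (∀ i, μ i < M) ∧
                ((∑ j, α j * df j) + μ.degree = e) ∧ p = (∏ j, f j ^ α j) * monomial μ 1 } := by
          intro p hp
          have himg : (LinearMap.mulLeft ℂ (f j)) '' { p | ∃ (α : ι → ℕ) (μ : σ →₀ ℕ),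
              (∀ i, μ i < M) ∧ ((∑ j, α j * df j) + μ.degree = e - df j) ∧
              p = (∏ j, f j ^ α j) * monomial μ 1 } ⊆
              { p | ∃ (α : ι → ℕ) (μ : σ →₀ ℕ), (∀ i, μ i < M) ∧
                ((∑ j, α j * df j) + μ.degree = e) ∧ p = (∏ j, f j ^ α j) * monomial μ 1 } := by
            rintro _ ⟨q, ⟨α, μ, h1, h2, rfl⟩, rfl⟩
            refine ⟨fun k => α k + (if k = j then 1 else 0), μ, h1, ?_, ?_⟩
            · have hsum : (∑ k, (α k + if k = j then 1 else 0) * df k)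
                  = (∑ k, α k * df k) + df j := by
                rw [show (∑ k, (α k + if k = j then 1 else 0) * df k)
                    = (∑ k, (α k * df k + if k = j then df k else 0)) from
                  Finset.sum_congr rfl (fun k _ => by split <;> ring)]
                rw [Finset.sum_add_distrib, Finset.sum_ite_eq' Finset.univ j (fun k => df k),
                  if_pos (Finset.mem_univ j)]
              rw [hsum]
              have h3 := hdfM j
              have h4 := heM
              generalize (∑ k, α k * df k) = s at h2 ⊢
              omega
            · have hprod : (∏ k, f k ^ (α k + if k = j then 1 else 0))
                  = (∏ k, f k ^ α k) * f j := by
                rw [show (∏ k, f k ^ (α k + if k = j then 1 else 0))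
                    = (∏ k, f k ^ α k * (if k = j then f k else 1)) from
                  Finset.prod_congr rfl (fun k _ => by rw [pow_add]; split <;> simp)]
                rw [Finset.prod_mul_distrib, Finset.prod_ite_eq' Finset.univ j (fun k => f k),
                  if_pos (Finset.mem_univ j)]
              rw [hprod, LinearMap.mulLeft_apply]
              ring
          have h1 : f j * p ∈ Submodule.map (LinearMap.mulLeft ℂ (f j))
              (Submodule.span ℂ { p | ∃ (α : ι → ℕ) (μ : σ →₀ ℕ), (∀ i, μ i < M) ∧
                ((∑ j, α j * df j) + μ.degree = e - df j) ∧
                p = (∏ j, f j ^ α j) * monomial μ 1 }) := ⟨p, hp, rfl⟩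
          rw [Submodule.map_span] at h1
          exact Submodule.span_mono himg h1
        exact hmul _ hind
  -- dimension counting contradiction
  set a := Fintype.card σ with ha
  set b := Fintype.card ι with hb
  have ha1 : 1 ≤ a := by omega
  set K := a ^ b * M ^ a with hK
  set E := a * K with hE
  set T : Finset (MvPolynomial σ ℂ) := Finset.image
    (fun q : (ι → Fin (E+1)) × (σ → Fin M) =>
      (∏ j, f j ^ (q.1 j).val) * monomial (Finsupp.equivFunOnFinite.symm
        fun i => (q.2 i).val) 1) Finset.univ with hT
  have hspan : ∀ m : σ →₀ ℕ, (∀ i, m i ≤ K) → monomial m (1:ℂ) ∈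
      Submodule.span ℂ (T : Set (MvPolynomial σ ℂ)) := by
    intro m hmK
    have hdegE : m.degree ≤ E := by
      calc m.degree ≤ ∑ i, m i := degree_le_sum_univ m
      _ ≤ ∑ _i : σ, K := Finset.sum_le_sum (fun i _ => hmK i)
      _ = a * K := by rw [Finset.sum_const, smul_eq_mul, Finset.card_univ]
    refine Submodule.span_mono ?_ (key m.degree m rfl)
    rintro p ⟨α, μ, h1, h2, rfl⟩
    have hαE : ∀ j, α j ≤ E := by
      intro j
      have h3 : α j * df j ≤ ∑ k, α k * df k :=
        Finset.single_le_sum (f := fun k => α k * df k) (fun k _ => Nat.zero_le _)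
          (Finset.mem_univ j)
      have h4 := hdf j
      nlinarith [hdegE, h2]
    rw [Finset.coe_image]
    refine ⟨(fun j => ⟨α j, by have := hαE j; omega⟩, fun i => ⟨μ i, h1 i⟩),
      Finset.mem_coe.mpr (Finset.mem_univ _), ?_⟩
    simp only
    rw [Finsupp.equivFunOnFinite_symm_coe]
  set u : (σ → Fin (K+1)) → (σ →₀ ℕ) :=
    fun gK => Finsupp.equivFunOnFinite.symm (fun i => (gK i).val) with hu
  have huinj : Function.Injective u := by
    intro x y hxy
    funext i
    have := congrArg (fun m : σ →₀ ℕ => m i) hxy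
    simpa [hu, Fin.val_eq_val] using this
  have hli : LinearIndependent ℂ (fun gK => monomial (u gK) (1:ℂ)) := by
    have := (basisMonomials σ ℂ).linearIndependent.comp u huinj
    rwa [coe_basisMonomials] at this
  set W := Submodule.span ℂ (T : Set (MvPolynomial σ ℂ)) with hW
  have hmem : ∀ gK : σ → Fin (K+1), monomial (u gK) (1:ℂ) ∈ W := by
    intro gK
    apply hspan
    intro i
    simp only [hu, Finsupp.coe_equivFunOnFinite_symm]
    omega
  have hli' : LinearIndependent ℂ (fun gK => (⟨monomial (u gK) 1, hmem gK⟩ : W)) := by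
    apply LinearIndependent.of_comp W.subtype
    exact hli
  haveI : Module.Finite ℂ W := inferInstance
  have hcard1 : Fintype.card (σ → Fin (K+1)) ≤ Module.finrank ℂ W :=
    hli'.fintype_card_le_finrank
  have hcard2 : Module.finrank ℂ W ≤ T.card := finrank_span_finset_le_card T
  have hcard3 : T.card ≤ (E+1) ^ b * M ^ a := by
    calc T.card ≤ Fintype.card ((ι → Fin (E+1)) × (σ → Fin M)) :=
          Finset.card_image_le.trans (le_of_eq (Finset.card_univ))
    _ = (E+1) ^ b * M ^ a := by
        rw [Fintype.card_prod, Fintype.card_fun, Fintype.card_fun, Fintype.card_fin,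
          Fintype.card_fin]
  have hcard4 : (K+1) ^ a ≤ (E+1) ^ b * M ^ a := by
    calc (K+1) ^ a = Fintype.card (σ → Fin (K+1)) := by
          rw [Fintype.card_fun, Fintype.card_fin]
    _ ≤ Module.finrank ℂ W := hcard1
    _ ≤ T.card := hcard2
    _ ≤ (E+1) ^ b * M ^ a := hcard3
  have harith : (E+1) ^ b * M ^ a < (K+1) ^ a := by
    have hEa : E + 1 ≤ a * (K+1) := by
      calc E + 1 = a * K + 1 := by rw [hE]
      _ ≤ a * K + a := by omega
      _ = a * (K+1) := by ring
    calc (E+1) ^ b * M ^ a ≤ (a * (K+1)) ^ b * M ^ a :=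
          Nat.mul_le_mul_right _ (Nat.pow_le_pow_left hEa _)
    _ = a ^ b * M ^ a * (K+1) ^ b := by rw [mul_pow]; ring
    _ = K * (K+1) ^ b := by rw [hK]
    _ < (K+1) * (K+1) ^ b := by
          have hpos : 0 < (K+1) ^ b := by positivity
          nlinarith
    _ = (K+1) ^ (b+1) := by ring
    _ ≤ (K+1) ^ a := Nat.pow_le_pow_right (by omega) (by omega)
  exact absurd hcard4 (not_le.mpr harith)


private lemma degree_eq_sum_univ' {σ : Type*} [Fintype σ] (m : σ →₀ ℕ) :
    m.degree = ∑ i, m i :=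
  Finset.sum_subset (Finset.subset_univ _) (fun i _ hi => Finsupp.notMem_support_iff.mp hi)

/-- Lemma 4.1 (criterion): if `F` is a smooth homogeneous polynomial of degree
`d ≥ 3` and `A`, `B` are disjoint index sets with `|A| > |B|`, then `F` has a
monomial (with nonzero coefficient) whose total degree in the variables of `A`
is at least `d - 1` and in which no variable of `B` appears. -/
theorem stmt_12 (d N : ℕ) (hd : 3 ≤ d) (hN : 2 ≤ N)
    (F : MvPolynomial (Fin N) ℂ) (hhom : F.IsHomogeneous d)
    (hsmooth : ∀ x : Fin N → ℂ, (∀ i : Fin N, eval x (pderiv i F) = 0) → x = 0)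
    (A B : Finset (Fin N)) (hdisj : Disjoint A B) (hcard : B.card < A.card) :
    ∃ m ∈ F.support, d - 1 ≤ ∑ i ∈ A, m i ∧ ∀ j ∈ B, m j = 0 := by
  by_contra hcon
  push_neg at hcon
  classical
  set g : Fin N → MvPolynomial {i // i ∈ A} ℂ :=
    fun i => if h : i ∈ A then X (⟨i, h⟩ : {i // i ∈ A}) else 0 with hgdef
  set restr : MvPolynomial (Fin N) ℂ →ₐ[ℂ] MvPolynomial {i // i ∈ A} ℂ := aeval g with hrdef
  have hghom : ∀ i, (g i).IsHomogeneous 1 := by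
    intro i
    rw [hgdef]
    dsimp only
    split
    · exact isHomogeneous_X _ _
    · exact isHomogeneous_zero _ _ _
  have hfhom : ∀ j : {j // j ∈ B}, (restr (pderiv (j : Fin N) F)).IsHomogeneous (d - 1) := by
    intro j
    have := (pderiv_isHomog hhom (j : Fin N)).aeval g hghom
    rwa [one_mul] at this
  obtain ⟨ξ, hξne, hξ⟩ := exists_common_zero (σ := {i // i ∈ A}) (ι := {j // j ∈ B})
      (by simpa [Fintype.card_coe] using hcard)
      (fun j => restr (pderiv (j : Fin N) F)) (fun _ => d - 1) (fun _ => by show 1 ≤ d - 1; omega) hfhom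
  set x : Fin N → ℂ := fun i => if h : i ∈ A then ξ ⟨i, h⟩ else 0 with hxdef
  have hbridge : ∀ p : MvPolynomial (Fin N) ℂ, eval x p = eval ξ (restr p) := by
    intro p
    have hcomp : (eval ξ).comp (restr.toRingHom) = (eval x : MvPolynomial (Fin N) ℂ →+* ℂ) := by
      apply MvPolynomial.ringHom_ext
      · intro r
        simp
      · intro i
        simp only [RingHom.comp_apply, RingHom.coe_coe]
        show eval ξ (aeval g (X i)) = eval x (X i)
        rw [aeval_X, eval_X, hgdef, hxdef]
        dsimp only
        split
        · rw [eval_X]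
        · rw [map_zero]
    exact (RingHom.congr_fun hcomp p).symm
  have hzero : ∀ i : Fin N, eval x (pderiv i F) = 0 := by
    intro i
    by_cases hiB : i ∈ B
    · rw [hbridge]
      exact hξ ⟨i, hiB⟩
    · rw [F.as_sum, map_sum, map_sum]
      apply Finset.sum_eq_zero
      intro m hm
      rw [pderiv_monomial, eval_monomial]
      by_cases h0 : m i = 0
      · rw [h0]
        simp
      · by_cases hout : ∀ k, (m - Finsupp.single i (1:ℕ)) k ≠ 0 → k ∈ A
        · exfalso
          have hmk : ∀ k, k ∉ A → k ≠ i → m k = 0 := by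
            intro k hkA hki
            by_contra hne
            refine hkA (hout k ?_)
            rw [Finsupp.tsub_apply, Finsupp.single_apply, if_neg (fun h => hki h.symm)]
            omega
          have hB : ∀ j ∈ B, m j = 0 := by
            intro j hj
            exact hmk j (Finset.disjoint_right.mp hdisj hj) (fun hji => hiB (hji ▸ hj))
          have htot : ∑ k ∈ A, m k + ∑ k ∈ Aᶜ, m k = d := by
            rw [Finset.sum_add_sum_compl]
            rw [← degree_eq_sum_univ']
            exact isHomog_degree hhom hm
          have hcompl : ∑ k ∈ Aᶜ, m k ≤ 1 := by
            by_cases hiA : i ∈ A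
            · have hz : ∀ k ∈ Aᶜ, m k = 0 := fun k hk =>
                hmk k (Finset.mem_compl.mp hk)
                  (fun h => (Finset.mem_compl.mp hk) (h ▸ hiA))
              rw [Finset.sum_eq_zero hz]
              omega
            · have hsum : ∑ k ∈ Aᶜ, m k = m i := by
                apply Finset.sum_eq_single_of_mem i (Finset.mem_compl.mpr hiA)
                intro k hk hki
                exact hmk k (Finset.mem_compl.mp hk) hki
              have hmi : (m - Finsupp.single i (1:ℕ)) i = 0 := by
                by_contra hne
                exact hiA (hout i hne)
              rw [Finsupp.tsub_apply, Finsupp.single_eq_same] at hmi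
              omega
          obtain ⟨j, hjB, hjne⟩ := hcon m hm (by omega)
          exact hjne (hB j hjB)
        · push_neg at hout
          obtain ⟨k, hk1, hk2⟩ := hout
          have hxk : x k = 0 := by
            rw [hxdef]
            dsimp only
            rw [dif_neg hk2]
          have hprod : (Finsupp.prod (m - Finsupp.single i (1:ℕ)) fun k e => x k ^ e) = 0 := by
            apply Finset.prod_eq_zero (Finsupp.mem_support_iff.mpr hk1)
            show x k ^ ((m - Finsupp.single i (1:ℕ)) k) = 0
            rw [hxk, zero_pow hk1]
          rw [hprod, mul_zero]
  have hx0 := hsmooth x hzero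
  apply hξne
  funext s
  have hxs := congrFun hx0 s.val
  rw [hxdef] at hxs
  dsimp only at hxs
  rw [dif_pos s.prop] at hxs
  simpa using hxs
end

section
/- The diagonal projective transformation g of ℙ⁵ given by (x₁,…,x₆) ↦ (ζ³x₁, ζ^{-6}x₂, ζ^{12}x₃, ζ^{-24}x₄, x₅, ζ^{16}x₆), where ζ = exp(2πi/48), has order 48 in PGL(6,ℂ), and the cubic polynomial F = x₁²x₂ + x₂²x₃ + x₃²x₄ + x₄²x₅ + x₅³ + x₆³ satisfies F(g·x) = F(x); moreover F is smooth, so the smooth cubic fourfold V(F) admits an automorphism of order 48. -/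
open MvPolynomial Complex

/-- The diagonal transformation with weights `ζ^{(3,-6,12,-24,0,16)}`,
`ζ = exp(2πi/48)`, has order `48` modulo scalars, preserves the smooth cubic
`F = x₁²x₂ + x₂²x₃ + x₃²x₄ + x₄²x₅ + x₅³ + x₆³`; hence the smooth cubic
fourfold `V(F)` admits an automorphism of order `48`. -/
theorem stmt_17 (ζ : ℂ) (hζ : ζ = Complex.exp (2 * Real.pi * Complex.I / 48))
    (σ : Fin 6 → ℤ) (hσ : σ = ![3, -6, 12, -24, 0, 16])
    (F : MvPolynomial (Fin 6) ℂ)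
    (hF : F = X 0 ^ 2 * X 1 + X 1 ^ 2 * X 2 + X 2 ^ 2 * X 3 + X 3 ^ 2 * X 4
      + X 4 ^ 3 + X 5 ^ 3) :
    IsLeast {r : ℕ | 0 < r ∧ ∃ c : ℂ, ∀ j : Fin 6, (ζ ^ σ j) ^ r = c} 48 ∧
    (∀ x : Fin 6 → ℂ, eval (fun j : Fin 6 => ζ ^ σ j * x j) F = eval x F) ∧
    (∀ x : Fin 6 → ℂ, (∀ i : Fin 6, eval x (pderiv i F) = 0) → x = 0) := by
  have hprim : IsPrimitiveRoot ζ 48 := by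
    rw [hζ]
    exact_mod_cast Complex.isPrimitiveRoot_exp 48 (by norm_num)
  have hne : ζ ≠ 0 := hprim.ne_zero (by norm_num)
  have hd : ∀ a : ℤ, (48:ℤ) ∣ a → ζ ^ a = 1 := fun a ha => by
    rw [hprim.zpow_eq_one_iff_dvd]; exact_mod_cast ha
  have key : ∀ a b : ℤ, ∀ n : ℕ, (48:ℤ) ∣ a * n + b → (ζ ^ a) ^ n * ζ ^ b = 1 := by
    intro a b n h
    rw [← zpow_natCast (ζ ^ a), ← zpow_mul, ← zpow_add₀ hne]
    exact hd _ h
  subst hσ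
  have s0 : (![3, -6, 12, -24, 0, 16] : Fin 6 → ℤ) 0 = 3 := rfl
  have s1 : (![3, -6, 12, -24, 0, 16] : Fin 6 → ℤ) 1 = -6 := rfl
  have s2 : (![3, -6, 12, -24, 0, 16] : Fin 6 → ℤ) 2 = 12 := rfl
  have s3 : (![3, -6, 12, -24, 0, 16] : Fin 6 → ℤ) 3 = -24 := rfl
  have s4 : (![3, -6, 12, -24, 0, 16] : Fin 6 → ℤ) 4 = 0 := rfl
  have s5 : (![3, -6, 12, -24, 0, 16] : Fin 6 → ℤ) 5 = 16 := rfl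
  refine ⟨⟨⟨by norm_num, 1, fun j => ?_⟩, ?_⟩, ?_, ?_⟩
  · -- membership: each (ζ^σj)^48 = 1
    fin_cases j <;>
      simp only [s0, s1, s2, s3, s4, s5] <;>
      [ simpa using key 3 0 48 (by norm_num);
        simpa using key (-6) 0 48 (by norm_num);
        simpa using key 12 0 48 (by norm_num);
        simpa using key (-24) 0 48 (by norm_num);
        simpa using key 0 0 48 (by norm_num);
        simpa using key 16 0 48 (by norm_num) ]
  · -- lower bound
    rintro r ⟨hr, c, hc⟩
    have h4 := hc 4
    rw [s4, zpow_zero, one_pow] at h4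
    have conv : ∀ a : ℤ, (ζ ^ a) ^ r = 1 → (48:ℤ) ∣ a * r := by
      intro a ha
      rw [← zpow_natCast (ζ ^ a), ← zpow_mul, hprim.zpow_eq_one_iff_dvd] at ha
      exact_mod_cast ha
    have d3 : (48:ℤ) ∣ 3 * r := conv 3 (by rw [← s0, hc 0, ← h4])
    have d16 : (48:ℤ) ∣ 16 * r := conv 16 (by rw [← s5, hc 5, ← h4])
    omega
  · -- invariance
    intro x
    subst hF
    simp only [eval_add, eval_mul, eval_pow, eval_X, s0, s1, s2, s3, s4, s5, zpow_zero]
    have t1 := key 3 (-6) 2 (by norm_num)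
    have t2 := key (-6) 12 2 (by norm_num)
    have t3 := key 12 (-24) 2 (by norm_num)
    have t4 := key (-24) 0 2 (by norm_num)
    have t6 := key 16 0 3 (by norm_num)
    rw [zpow_zero, mul_one] at t4 t6
    linear_combination (x 0 ^ 2 * x 1) * t1 + (x 1 ^ 2 * x 2) * t2 + (x 2 ^ 2 * x 3) * t3
      + (x 3 ^ 2 * x 4) * t4 + x 5 ^ 3 * t6
  · -- smoothness
    intro x h
    subst hF
    have h0 := h 0; have h1 := h 1; have h2 := h 2
    have h3 := h 3; have h4 := h 4; have h5 := h 5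
    simp only [map_add, Derivation.leibniz, Derivation.leibniz_pow, pderiv_X, Pi.single_apply,
      smul_eq_mul, map_mul, map_pow, eval_add, eval_mul, eval_pow,
      eval_X, mul_zero, zero_mul, add_zero, zero_add, mul_one, one_mul,
      map_natCast, map_one, smul_zero, map_zero] at h0 h1 h2 h3 h4 h5
    simp at h0 h1 h2 h3 h4 h5
    have hx0 : x 0 = 0 := by
      rcases h0 with h' | h'
      · have : x 0 ^ 2 = 0 := by linear_combination h1 - 2 * x 2 * h'
        exact pow_eq_zero_iff (two_ne_zero) |>.mp this
      · exact h'
    have h12 : x 1 * x 2 = 0 := by linear_combination (1/2) * h1 - (1/2) * x 0 * hx0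
    have hx1 : x 1 = 0 := by
      have : x 1 ^ 3 = 0 := by linear_combination x 1 * h2 - 2 * x 3 * h12
      exact pow_eq_zero_iff (three_ne_zero) |>.mp this
    have h23 : x 2 * x 3 = 0 := by linear_combination (1/2) * h2 - (1/2) * x 1 * hx1
    have hx2 : x 2 = 0 := by
      have : x 2 ^ 3 = 0 := by linear_combination x 2 * h3 - 2 * x 4 * h23
      exact pow_eq_zero_iff (three_ne_zero) |>.mp this
    have h34 : x 3 * x 4 = 0 := by linear_combination (1/2) * h3 - (1/2) * x 2 * hx2
    have hx3 : x 3 = 0 := by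
      have : x 3 ^ 3 = 0 := by linear_combination x 3 * h4 - 3 * x 4 * h34
      exact pow_eq_zero_iff (three_ne_zero) |>.mp this
    have hx4 : x 4 = 0 := by
      have : x 4 ^ 2 = 0 := by linear_combination (1/3) * h4 - (1/3) * x 3 * hx3
      exact pow_eq_zero_iff (two_ne_zero) |>.mp this
    funext i
    fin_cases i <;> simp [hx0, hx1, hx2, hx3, hx4, h5]
end

section
/- Let G be a finite abelian group and suppose G acts faithfully and linearly on ℙ^{N-1} preserving a smooth hypersurface V(F) of degree d ≥ 3, with a given lifting G̃ ≤ GL(N,ℂ) of the projective action. Then there exists a (possibly different) lifting j : G → GL(N,ℂ) and a character λ : G → ℂ^× with j(g)(F) = λ(g)·F for all g ∈ G, such that λ(g) = 1 whenever the order of g is coprime to d. -/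
open MvPolynomial

private lemma evalSmulHomog {N n : ℕ} (F : MvPolynomial (Fin N) ℂ)
    (hF : F.IsHomogeneous n) (c : ℂ) (x : Fin N → ℂ) :
    eval (c • x) F = c ^ n * eval x F := by
  rw [eval_eq, eval_eq, Finset.mul_sum]
  refine Finset.sum_congr rfl fun s hs => ?_
  have hd : ∑ i ∈ s.support, s i = n := by
    have := hF (mem_support_iff.mp hs)
    simpa [Finsupp.weight_apply, Finsupp.sum] using this
  calc F.coeff s * ∏ i ∈ s.support, (c • x) i ^ s i
      = F.coeff s * ∏ i ∈ s.support, (c ^ s i * x i ^ s i) := by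
        simp [mul_pow]
    _ = c ^ n * (F.coeff s * ∏ i ∈ s.support, x i ^ s i) := by
        rw [Finset.prod_mul_distrib, Finset.prod_pow_eq_pow_sum, hd]; ring

private lemma coprimePart_coprime (n d : ℕ) (hn : n ≠ 0) :
    Nat.Coprime (n / n.gcd (d ^ n)) d := by
  by_contra h
  obtain ⟨p, hp, hp1, hp2⟩ := Nat.Prime.not_coprime_iff_dvd.mp h
  set t := n.gcd (d ^ n) with ht'
  have ht : t ∣ n := Nat.gcd_dvd_left _ _
  set k := n.factorization p with hk'
  have hk : p ^ k ∣ n := Nat.ordProj_dvd n p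
  have hkn : k ≤ n := le_of_lt (Nat.factorization_lt p hn)
  have hpd : p ^ k ∣ d ^ n :=
    dvd_trans (pow_dvd_pow_of_dvd hp2 k) (pow_dvd_pow d hkn)
  have hkt : p ^ k ∣ t := Nat.dvd_gcd hk hpd
  have hpn : p ^ (k + 1) ∣ n := by
    have h1 : p * t ∣ n := by
      have := mul_dvd_mul hp1 (dvd_refl t)
      rwa [Nat.div_mul_cancel ht] at this
    calc p ^ (k + 1) = p * p ^ k := by ring
      _ ∣ p * t := mul_dvd_mul_left p hkt
      _ ∣ n := h1
  have := (Nat.Prime.pow_dvd_iff_le_factorization hp hn).mp hpn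
  omega

private lemma dvd_coprimePart {n d m : ℕ} (hm : m ∣ n) (hc : Nat.Coprime m d) :
    m ∣ n / n.gcd (d ^ n) := by
  have h1 : Nat.Coprime m (n.gcd (d ^ n)) :=
    Nat.Coprime.coprime_dvd_right (Nat.gcd_dvd_right _ _) (hc.pow_right n)
  have h2 : m ∣ n / n.gcd (d ^ n) * n.gcd (d ^ n) := by
    rwa [Nat.div_mul_cancel (Nat.gcd_dvd_left _ _)]
  exact h1.dvd_of_dvd_mul_right h2

/-- Lemma (lifting): if a finite abelian group `G` acts faithfully and linearly
on `ℙ^{N-1}` preserving a smooth hypersurface `V(F)` of degree `d`, via a given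
lifting `ρ : G → GL(N, ℂ)`, then there is a lifting `j` of the same projective
action and a character `λ : G → ℂˣ` with `j(g)(F) = λ(g)·F` for all `g`, and
`λ(g) = 1` whenever `orderOf g` is coprime to `d`. Here `g(F) = F ∘ g⁻¹`. -/
theorem stmt_19 (d N : ℕ) (hd : 3 ≤ d) (hN : 3 ≤ N)
    (G : Type*) [CommGroup G] [Fintype G]
    (ρ : G →* GL (Fin N) ℂ)
    (F : MvPolynomial (Fin N) ℂ) (hhom : F.IsHomogeneous d)
    (hsmooth : ∀ x : Fin N → ℂ, (∀ i : Fin N, eval x (pderiv i F) = 0) → x = 0)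
    (hfaithful : ∀ g : G,
      (∃ c : ℂ, (ρ g : Matrix (Fin N) (Fin N) ℂ) = c • (1 : Matrix (Fin N) (Fin N) ℂ)) →
      g = 1)
    (hpres : ∀ g : G, ∃ c : ℂ, c ≠ 0 ∧ ∀ x : Fin N → ℂ,
      eval (((((ρ g)⁻¹ : GL (Fin N) ℂ)) : Matrix (Fin N) (Fin N) ℂ).mulVec x) F
        = c * eval x F) :
    ∃ (j : G →* GL (Fin N) ℂ) (lam : G →* ℂˣ),
      (∀ g : G, ∃ c : ℂˣ,
        (j g : Matrix (Fin N) (Fin N) ℂ) = (c : ℂ) • (ρ g : Matrix (Fin N) (Fin N) ℂ)) ∧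
      (∀ g : G, ∀ x : Fin N → ℂ,
        eval ((((j g)⁻¹ : GL (Fin N) ℂ) : Matrix (Fin N) (Fin N) ℂ).mulVec x) F
          = (lam g : ℂ) * eval x F) ∧
      (∀ g : G, Nat.Coprime (orderOf g) d → lam g = 1) := by
  -- F is nonzero
  have hF0 : F ≠ 0 := by
    intro h
    have : (fun _ : Fin N => (1 : ℂ)) = 0 := by
      apply hsmooth
      intro i
      simp [h]
    have := congrFun this ⟨0, by omega⟩
    simp at this
  -- a point where F doesn't vanish
  obtain ⟨x0, hx0⟩ : ∃ x0 : Fin N → ℂ, eval x0 F ≠ 0 := by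
    by_contra h
    push_neg at h
    exact hF0 (MvPolynomial.funext fun x => by simp [h x])
  choose c hc0 hc using hpres
  -- multiplicativity of c
  have keymul : ∀ g h : G, c (g * h) = c g * c h := by
    intro g h
    have h1 := hc (g * h) x0
    have h2 : ((ρ (g * h))⁻¹ : GL (Fin N) ℂ) = (ρ h)⁻¹ * (ρ g)⁻¹ := by
      rw [map_mul, mul_inv_rev]
    rw [h2, Units.val_mul, ← Matrix.mulVec_mulVec, hc h, hc g] at h1
    exact mul_right_cancel₀ hx0 (by linear_combination -h1)
  let lam0 : G →* ℂˣ :=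
    MonoidHom.mk' (fun g => Units.mk0 (c g) (hc0 g))
      (fun g h => by ext; simp [keymul g h])
  have lam0_val : ∀ g, (lam0 g : ℂ) = c g := fun g => rfl
  -- exponent setup
  set n := Monoid.exponent G with hn'
  have hn : n ≠ 0 := Monoid.exponent_ne_zero_of_finite
  set a := n / n.gcd (d ^ n) with ha'
  have ha : Nat.Coprime a d := coprimePart_coprime n d hn
  have hapos : 0 < a := by
    apply Nat.div_pos (Nat.le_of_dvd (Nat.pos_of_ne_zero hn) (Nat.gcd_dvd_left _ _))
    exact Nat.gcd_pos_of_pos_left _ (Nat.pos_of_ne_zero hn)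
  set e := d ^ (a.totient - 1) with he'
  have hde : d * e = d ^ a.totient := by
    rw [he', ← pow_succ']
    congr 1
    have := Nat.totient_pos.mpr hapos
    omega
  have hepos : 1 ≤ e := Nat.one_le_pow _ _ (by omega)
  have hde1 : 1 ≤ d * e := by
    have : 1 ≤ d := by omega
    exact Nat.one_le_iff_ne_zero.mpr (by positivity)
  set K := d * e - 1 with hK'
  have hKsucc : K + 1 = d * e := by omega
  have haK : a ∣ K := by
    have hmod : d ^ a.totient ≡ 1 [MOD a] := Nat.ModEq.pow_totient ha.symm
    have := (Nat.modEq_iff_dvd' (by rw [← hde]; exact hde1)).mp hmod.symm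
    rwa [← hde] at this
  -- the new character
  let lam : G →* ℂˣ :=
    MonoidHom.mk' (fun g => (lam0 g ^ K)⁻¹)
      (fun g h => by
        show (lam0 (g * h) ^ K)⁻¹ = (lam0 g ^ K)⁻¹ * (lam0 h ^ K)⁻¹
        rw [map_mul, mul_pow, mul_inv])
  -- scalar embedding
  let S : ℂˣ →* (Matrix (Fin N) (Fin N) ℂ)ˣ :=
    Units.map (algebraMap ℂ (Matrix (Fin N) (Fin N) ℂ)).toMonoidHom
  have hSval : ∀ u : ℂˣ, ((S u : (Matrix (Fin N) (Fin N) ℂ)ˣ) : Matrix (Fin N) (Fin N) ℂ)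
      = algebraMap ℂ (Matrix (Fin N) (Fin N) ℂ) (u : ℂ) := fun u => rfl
  have hScomm : ∀ (u : ℂˣ) (v : GL (Fin N) ℂ), S u * v = v * S u := by
    intro u v
    apply Units.ext
    rw [Units.val_mul, Units.val_mul, hSval]
    exact Algebra.commutes (u : ℂ) (v : Matrix (Fin N) (Fin N) ℂ)
  have jmul : ∀ g h : G, S (lam0 (g * h) ^ e) * ρ (g * h)
      = (S (lam0 g ^ e) * ρ g) * (S (lam0 h ^ e) * ρ h) := by
    intro g h
    rw [map_mul lam0, mul_pow, map_mul S, map_mul ρ]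
    exact Commute.mul_mul_mul_comm (hScomm (lam0 h ^ e) (ρ g)) _ _
  let j : G →* GL (Fin N) ℂ :=
    MonoidHom.mk' (fun g => S (lam0 g ^ e) * ρ g) jmul
  refine ⟨j, lam, ?_, ?_, ?_⟩
  · intro g
    refine ⟨lam0 g ^ e, ?_⟩
    show ((S (lam0 g ^ e) * ρ g : (Matrix (Fin N) (Fin N) ℂ)ˣ) : Matrix (Fin N) (Fin N) ℂ)
      = ((lam0 g ^ e : ℂˣ) : ℂ) • (ρ g : Matrix (Fin N) (Fin N) ℂ)
    rw [Units.val_mul, hSval, ← Algebra.smul_def]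
  · intro g x
    have hjinv : ((j g)⁻¹ : GL (Fin N) ℂ) = (ρ g)⁻¹ * S ((lam0 g ^ e)⁻¹) := by
      show (S (lam0 g ^ e) * ρ g)⁻¹ = _
      rw [mul_inv_rev, map_inv]
    have hmat : (((j g)⁻¹ : GL (Fin N) ℂ) : Matrix (Fin N) (Fin N) ℂ)
        = (((lam0 g ^ e)⁻¹ : ℂˣ) : ℂ) • (((ρ g)⁻¹ : GL (Fin N) ℂ) : Matrix (Fin N) (Fin N) ℂ) := by
      rw [hjinv, Units.val_mul, hSval, ← Algebra.commutes, ← Algebra.smul_def]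
    rw [hmat, Matrix.smul_mulVec, evalSmulHomog F hhom, hc g]
    have hlamg : ((lam g : ℂˣ) : ℂ) = ((c g) ^ K)⁻¹ := by
      show (((lam0 g ^ K)⁻¹ : ℂˣ) : ℂ) = _
      rw [Units.val_inv_eq_inv_val, Units.val_pow_eq_pow_val, lam0_val]
    rw [hlamg]
    have hcg := hc0 g
    have hval : (((lam0 g ^ e)⁻¹ : ℂˣ) : ℂ) = ((c g) ^ e)⁻¹ := by
      rw [Units.val_inv_eq_inv_val, Units.val_pow_eq_pow_val, lam0_val]
    rw [hval]
    field_simp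
    ring_nf
    rw [← pow_succ', hKsucc, inv_pow, mul_comm e d, mul_inv_cancel₀ (pow_ne_zero _ hcg), one_mul]
  · intro g hg
    have hm : orderOf g ∣ K := dvd_trans (dvd_coprimePart (Monoid.order_dvd_exponent g) hg) haK
    have h1 : lam0 g ^ orderOf g = 1 := by
      rw [← map_pow, pow_orderOf_eq_one g, map_one]
    have h2 : lam0 g ^ K = 1 := by
      obtain ⟨q, hq⟩ := hm
      rw [hq, pow_mul, h1, one_pow]
    show (lam0 g ^ K)⁻¹ = 1
    rw [h2, inv_one]
end
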